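/- Let π : G → K be a surjective group homomorphism and let A be a finite symmetric generating set of G, so that π(A) is a finite symmetric generating set of K. If there exist a ∈ π(A) and a word w over π(A) such that the word a·w·a⁻¹ (the letter a, followed by the letters of w, followed by a⁻¹) is geodesic in K over π(A), then the geodesic language Geo(G,A) is not piecewise excluding. -/

import Mathlib

/-- `w` is a word over the alphabet `A`: every letter of `w` lies in `A`. -/
def IsWordOver {G : Type*} (A : Finset G) (w : List G) : Prop :=
  ∀ x ∈ w, x ∈ A

/-- `A` is a finite symmetric (inverse-closed) generating set of the group `G`. -/
def IsSymmGen {G : Type*} [Group G] (A : Finset G) : Prop :=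
  Subgroup.closure (A : Set G) = ⊤ ∧ ∀ a ∈ A, a⁻¹ ∈ A

/-- `w` is a geodesic word over `A`: no word over `A` of strictly smaller length
evaluates to the same element of `G`. -/
def IsGeodesic {G : Type*} [Group G] (A : Finset G) (w : List G) : Prop :=
  IsWordOver A w ∧
    ∀ v : List G, IsWordOver A v → v.prod = w.prod → w.length ≤ v.length

/-- The geodesic language of `G` over `A`. -/
def Geo {G : Type*} [Group G] (A : Finset G) : Set (List G) :=
  {w | IsGeodesic A w}

/-- A language `L` of words over `A` is piecewise excluding if there is a finite set `F`
of words over `A` such that a word `w` over `A` lies in `L` iff no element of `F` is a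
piecewise subword (i.e. a not-necessarily-contiguous subsequence) of `w`. -/
def PiecewiseExcluding {G : Type*} (A : Finset G) (L : Set (List G)) : Prop :=
  ∃ F : Finset (List G), (∀ u ∈ F, IsWordOver A u) ∧
    ∀ w : List G, IsWordOver A w → (w ∈ L ↔ ∀ u ∈ F, ¬ List.Sublist u w)

/-- Any word over the image alphabet lifts letterwise. -/
lemma lift_word {G K : Type*} [DecidableEq K] (π : G → K) (A : Finset G) :
    ∀ w : List K, IsWordOver (A.image π) w →
      ∃ ω : List G, IsWordOver A ω ∧ ω.map π = w := by
  intro w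
  induction w with
  | nil => exact fun _ => ⟨[], fun x hx => absurd hx List.not_mem_nil, rfl⟩
  | cons k t ih =>
    intro h
    obtain ⟨ω, hω, hmap⟩ := ih (fun x hx => h x (List.mem_cons_of_mem _ hx))
    obtain ⟨g, hg, hgk⟩ := Finset.mem_image.mp (h k List.mem_cons_self)
    refine ⟨g :: ω, ?_, by simp [hmap, hgk]⟩
    intro x hx
    rcases List.mem_cons.mp hx with rfl | hx
    · exact hg
    · exact hω x hx

/-- If `π` maps a word over `A` to a geodesic word over `π(A)`, the word is geodesic. -/
lemma geodesic_of_map {G K : Type*} [Group G] [Group K] [DecidableEq K]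
    (π : G →* K) (A : Finset G) (ω : List G) (hω : IsWordOver A ω)
    (h : IsGeodesic (A.image π) (ω.map π)) : IsGeodesic A ω := by
  refine ⟨hω, fun v hv hprod => ?_⟩
  have h1 : IsWordOver (A.image π) (v.map π) := by
    intro x hx
    obtain ⟨g, hg, rfl⟩ := List.mem_map.mp hx
    exact Finset.mem_image_of_mem π (hv g hg)
  have h2 : (v.map π).prod = (ω.map π).prod := by
    rw [← map_list_prod π, ← map_list_prod π, hprod]
  have := h.2 (v.map π) h1 h2
  simpa using this

theorem extension_not_piecewise_excluding
    {G K : Type*} [Group G] [Group K] [DecidableEq K]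
    (π : G →* K) (hπ : Function.Surjective π)
    (A : Finset G) (hA : IsSymmGen A)
    (a : K) (ha : a ∈ A.image π) (w : List K) (hw : IsWordOver (A.image π) w)
    (hgeo : IsGeodesic (A.image π) (a :: (w ++ [a⁻¹]))) :
    IsSymmGen (A.image π) ∧ ¬ PiecewiseExcluding A (Geo A) := by
  constructor
  · constructor
    · have : ((A.image π : Finset K) : Set K) = π '' (A : Set G) := by
        simp [Finset.coe_image]
      rw [this, ← MonoidHom.map_closure, hA.1]
      exact Subgroup.map_top_of_surjective π hπ
    · intro x hx
      obtain ⟨g, hg, rfl⟩ := Finset.mem_image.mp hx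
      exact Finset.mem_image.mpr ⟨g⁻¹, hA.2 g hg, map_inv π g⟩
  · rintro ⟨F, hF, hiff⟩
    -- lift `a` and `w`
    obtain ⟨α, hα, hαa⟩ := Finset.mem_image.mp ha
    obtain ⟨ω, hω, hmap⟩ := lift_word π A w hw
    set W : List G := α :: (ω ++ [α⁻¹]) with hW
    have hWword : IsWordOver A W := by
      intro x hx
      rcases List.mem_cons.mp hx with rfl | hx
      · exact hα
      · rcases List.mem_append.mp hx with hx | hx
        · exact hω x hx
        · rcases List.mem_singleton.mp hx with rfl
          exact hA.2 α hα
    have hWmap : W.map π = a :: (w ++ [a⁻¹]) := by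
      simp [hW, hmap, hαa]
    have hWgeo : IsGeodesic A W := by
      apply geodesic_of_map π A W hWword
      rw [hWmap]; exact hgeo
    -- `[α, α⁻¹]` is a sublist of `W`, a word over `A`
    have hsub : List.Sublist [α, α⁻¹] W := by
      rw [hW]
      exact List.cons_sublist_cons.mpr (List.sublist_append_right ω [α⁻¹])
    have huword : IsWordOver A [α, α⁻¹] := by
      intro x hx
      rcases List.mem_cons.mp hx with rfl | hx
      · exact hα
      · rcases List.mem_singleton.mp (by simpa using hx) with rfl
        exact hA.2 α hα
    -- piecewise-excluding languages are sublist-closed, so `[α, α⁻¹]` would be geodesic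
    have hWF : ∀ u ∈ F, ¬ List.Sublist u W := (hiff W hWword).mp hWgeo
    have hugeo : IsGeodesic A [α, α⁻¹] := by
      refine (hiff _ huword).mpr fun u hu hsubu => ?_
      exact hWF u hu (hsubu.trans hsub)
    -- but it is not: the empty word is shorter with the same product
    have := hugeo.2 [] (fun x hx => absurd hx List.not_mem_nil) (by simp)
    simp at this
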